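/- arXiv:2501.06382 — 3 statements merged into one kernel-verified Lean document; each statement's English description precedes it below -/
import Mathlib

section
/- Fix T ∈ ℕ, a finite set V, a subset H ⊆ V of size l with l + 2 ≤ |V|, a real p ∈ (0,1), and probabilities (q_v)_{v ∈ V} with q_v = p for v ∈ H, Σ_v q_v = 1 and 0 < q_v ≤ p for v ∉ H. There exists a coupling of T i.i.d. samples from the distribution q and from a distribution q' in which H is enlarged by one element w ∉ H (with q'_v = p for v ∈ H ∪ {w}, and q'_v ≤ q_v for v ∉ H ∪ {w}), such that the counts satisfy N(v) = N'(v) for v ∈ H, N(w) ≤ N'(w), and N(v) ≥ N'(v) for v ∉ H ∪ {w}. -/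
open MeasureTheory

/-- Coupling construction: given a distribution `q` assigning probability `p` to each
token of `H` and at most `p` elsewhere, and a distribution `q'` obtained by raising the
probability of one extra token `w ∉ H` to `p` (lowering only other tokens outside
`H ∪ {w}`), there is a coupling of `T` i.i.d. samples from `q` and `q'` under which,
almost surely, the counts agree on `H`, the count of `w` does not decrease, and the
counts of all other tokens do not increase. -/
theorem coupling_exists {V : Type*} [Fintype V] [DecidableEq V]
    [MeasurableSpace V] [MeasurableSingletonClass V]
    (T : ℕ) (H : Finset V) (hl : H.card + 2 ≤ Fintype.card V)
    (p : ENNReal) (hp0 : 0 < p) (hp1 : p < 1)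
    (q q' : PMF V) (w : V) (hw : w ∉ H)
    (hqH : ∀ v ∈ H, q v = p)
    (hqout : ∀ v ∉ H, 0 < q v ∧ q v ≤ p)
    (hq'H : ∀ v ∈ insert w H, q' v = p)
    (hq'out : ∀ v ∉ insert w H, q' v ≤ q v) :
    ∃ ν : Measure ((Fin T → V) × (Fin T → V)), IsProbabilityMeasure ν ∧
      ν.map Prod.fst = (Measure.pi fun _ : Fin T => q.toMeasure) ∧
      ν.map Prod.snd = (Measure.pi fun _ : Fin T => q'.toMeasure) ∧
      ν {ωp : (Fin T → V) × (Fin T → V) |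
          (∀ v ∈ H, (Finset.univ.filter fun i => ωp.1 i = v).card =
                    (Finset.univ.filter fun i => ωp.2 i = v).card) ∧
          (Finset.univ.filter fun i => ωp.1 i = w).card ≤
            (Finset.univ.filter fun i => ωp.2 i = w).card ∧
          (∀ v ∉ insert w H, (Finset.univ.filter fun i => ωp.2 i = v).card ≤
            (Finset.univ.filter fun i => ωp.1 i = v).card)} = 1 := by
  classical
  set K : Finset V := insert w H with hK
  -- single step coupling weight function
  set f : V × V → ENNReal := fun x =>
    if x.1 = x.2 then (if x.1 ∈ K then q x.1 else q' x.1)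
    else if x.2 = w ∧ x.1 ∉ K then q x.1 - q' x.1 else 0 with hf
  have hwK : w ∈ K := Finset.mem_insert_self w H
  have hq'le : ∀ a, a ∉ K → q' a ≤ q a := fun a ha => hq'out a ha
  -- row sums
  have hrow : ∀ a, ∑ b, f (a, b) = q a := by
    intro a
    by_cases haK : a ∈ K
    · rw [Finset.sum_eq_single_of_mem a (Finset.mem_univ a)]
      · simp [hf, haK]
      · intro b _ hb
        simp only [hf]
        rw [if_neg (by simpa using hb.symm), if_neg (by simp [haK])]
    · have haw : a ≠ w := fun h => haK (h ▸ hwK)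
      have : ∑ b ∈ ({a, w} : Finset V), f (a, b) = ∑ b, f (a, b) := by
        apply Finset.sum_subset (Finset.subset_univ _)
        intro b _ hb
        simp only [Finset.mem_insert, Finset.mem_singleton, not_or] at hb
        simp only [hf]
        rw [if_neg (fun h => hb.1 h.symm), if_neg (by simp [hb.2])]
      rw [← this, Finset.sum_pair haw]
      have h1 : f (a, a) = q' a := by simp [hf, haK]
      have h2 : f (a, w) = q a - q' a := by simp [hf, haw, haK]
      rw [h1, h2, add_tsub_cancel_of_le (hq'le a haK)]
  -- the key column identity at w
  have hsumq : ∑ a, q a = 1 := by rw [← tsum_fintype (L := .unconditional _)]; exact q.tsum_coe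
  have hsumq' : ∑ a, q' a = 1 := by rw [← tsum_fintype (L := .unconditional _)]; exact q'.tsum_coe
  have hcH : ∑ a ∈ H, q a = ∑ a ∈ H, q' a := by
    refine Finset.sum_congr rfl fun a ha => ?_
    rw [hqH a ha, hq'H a (Finset.mem_insert_of_mem ha)]
  have hq'w : q' w = p := hq'H w hwK
  have hKq : ∑ a ∈ K, q a + ∑ a ∈ Kᶜ, q a = 1 := by
    rw [Finset.sum_add_sum_compl]; exact hsumq
  have hKq' : ∑ a ∈ K, q' a + ∑ a ∈ Kᶜ, q' a = 1 := by
    rw [Finset.sum_add_sum_compl]; exact hsumq'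
  have hKqs : ∑ a ∈ K, q a = q w + ∑ a ∈ H, q a := by
    rw [hK, Finset.sum_insert hw]
  have hKq's : ∑ a ∈ K, q' a = p + ∑ a ∈ H, q a := by
    rw [hK, Finset.sum_insert hw, hq'w, hcH]
  have hD : (∑ a ∈ Kᶜ, (q a - q' a)) + ∑ a ∈ Kᶜ, q' a = ∑ a ∈ Kᶜ, q a := by
    rw [← Finset.sum_add_distrib]
    refine Finset.sum_congr rfl fun a ha => ?_
    exact tsub_add_cancel_of_le (hq'le a (by simpa using ha))
  have hfin : (∑ a ∈ H, q a) + ∑ a ∈ Kᶜ, q' a ≠ ⊤ := by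
    intro h
    have : p + ((∑ a ∈ H, q a) + ∑ a ∈ Kᶜ, q' a) = 1 := by
      rw [← add_assoc, ← hKq's, hKq']
    rw [h] at this; simp at this
  have hcolw : q w + ∑ a ∈ Kᶜ, (q a - q' a) = p := by
    have key : (q w + ∑ a ∈ Kᶜ, (q a - q' a)) + ((∑ a ∈ H, q a) + ∑ a ∈ Kᶜ, q' a)
        = p + ((∑ a ∈ H, q a) + ∑ a ∈ Kᶜ, q' a) := by
      have l1 : (q w + ∑ a ∈ Kᶜ, (q a - q' a)) + ((∑ a ∈ H, q a) + ∑ a ∈ Kᶜ, q' a)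
          = (q w + ∑ a ∈ H, q a) + ((∑ a ∈ Kᶜ, (q a - q' a)) + ∑ a ∈ Kᶜ, q' a) := by ring
      rw [l1, hD, ← hKqs, hKq]
      have l2 : p + ((∑ a ∈ H, q a) + ∑ a ∈ Kᶜ, q' a)
          = (p + ∑ a ∈ H, q a) + ∑ a ∈ Kᶜ, q' a := by ring
      rw [l2, ← hKq's, hKq']
    exact (ENNReal.add_left_inj hfin).mp key
  -- column sums
  have hcol : ∀ b, ∑ a, f (a, b) = q' b := by
    intro b
    by_cases hbw : b = w
    · subst hbw
      rw [← Finset.sum_add_sum_compl K fun a => f (a, b)]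
      have hc1 : ∑ a ∈ K, f (a, b) = q b := by
        rw [Finset.sum_eq_single_of_mem b hwK]
        · simp [hf, hwK]
        · intro a haK hab
          simp only [hf]
          rw [if_neg hab, if_neg (by simp [haK])]
      have hc2 : ∑ a ∈ Kᶜ, f (a, b) = ∑ a ∈ Kᶜ, (q a - q' a) := by
        refine Finset.sum_congr rfl fun a ha => ?_
        rw [Finset.mem_compl] at ha
        have haw : a ≠ b := fun h => ha (h ▸ hwK)
        simp [hf, haw, ha]
      rw [hc1, hc2, hq'w, hcolw]
    · rw [Finset.sum_eq_single_of_mem b (Finset.mem_univ b)]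
      · by_cases hbK : b ∈ K
        · have hbH : b ∈ H := by
            rcases Finset.mem_insert.mp hbK with h | h
            · exact absurd h hbw
            · exact h
          simp only [hf, if_pos rfl, if_pos hbK]
          rw [hqH b hbH, hq'H b hbK]
        · simp [hf, hbK]
      · intro a _ hab
        simp only [hf]
        rw [if_neg hab, if_neg (by simp [hbw])]
  -- total mass
  have hsum : ∑ x : V × V, f x = 1 := by
    rw [Fintype.sum_prod_type]
    simp only [hrow]
    exact hsumq
  set μc : PMF (V × V) := PMF.ofFintype f hsum with hμc
  -- marginals as PMFs
  have hfst : μc.map Prod.fst = q := by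
    ext a
    rw [PMF.map_apply, tsum_fintype, Fintype.sum_prod_type]
    rw [Finset.sum_eq_single_of_mem a (Finset.mem_univ a)]
    · simp only [if_pos rfl]
      simpa [hμc, PMF.ofFintype_apply] using hrow a
    · intro a' _ ha'
      rw [Finset.sum_eq_zero]
      intro b _
      rw [if_neg (Ne.symm ha')]
  have hsnd : μc.map Prod.snd = q' := by
    ext b
    rw [PMF.map_apply, tsum_fintype, Fintype.sum_prod_type_right]
    rw [Finset.sum_eq_single_of_mem b (Finset.mem_univ b)]
    · simp only [if_pos rfl]
      simpa [hμc, PMF.ofFintype_apply] using hcol b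
    · intro b' _ hb'
      rw [Finset.sum_eq_zero]
      intro a _
      rw [if_neg (Ne.symm hb')]
  have hm1 : μc.toMeasure.map Prod.fst = q.toMeasure := by
    rw [PMF.toMeasure_map Prod.fst μc measurable_fst, hfst]
  have hm2 : μc.toMeasure.map Prod.snd = q'.toMeasure := by
    rw [PMF.toMeasure_map Prod.snd μc measurable_snd, hsnd]
  -- the support set
  set G : Set (V × V) := {x | x.1 = x.2 ∨ (x.2 = w ∧ x.1 ∉ K)} with hG
  have hsupp : μc.support ⊆ G := by
    intro x hx
    by_contra hxG
    simp only [hG, Set.mem_setOf_eq, not_or] at hxG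
    apply hx
    show f x = 0
    simp only [hf]
    rw [if_neg hxG.1, if_neg hxG.2]
  -- the coupling measure
  set e : (Fin T → V × V) ≃ᵐ (Fin T → V) × (Fin T → V) :=
    MeasurableEquiv.arrowProdEquivProdArrow V V (Fin T) with he
  set π : Measure (Fin T → V × V) := Measure.pi fun _ : Fin T => μc.toMeasure with hπ
  have hecoe : ∀ g : Fin T → V × V, e g = (fun i => (g i).1, fun i => (g i).2) :=
    fun g => rfl
  refine ⟨π.map e, ?_, ?_, ?_, ?_⟩
  · exact Measure.isProbabilityMeasure_map e.measurable.aemeasurable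
  · -- first marginal
    have hF : Measurable fun g : Fin T → V × V => fun i => (g i).1 :=
      measurable_pi_lambda _ fun i => measurable_fst.comp (measurable_pi_apply i)
    rw [Measure.map_map measurable_fst e.measurable]
    have hcomp : (Prod.fst ∘ e : (Fin T → V × V) → (Fin T → V))
        = fun g i => (g i).1 := rfl
    rw [hcomp]
    refine (Measure.pi_eq fun s hs => ?_).symm
    rw [Measure.map_apply hF (MeasurableSet.univ_pi hs)]
    have hpre : (fun (g : Fin T → V × V) i => (g i).1) ⁻¹' Set.pi Set.univ s
        = Set.pi Set.univ fun i => Prod.fst ⁻¹' s i := by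
      ext g; simp [Set.mem_pi]
    rw [hpre, hπ, Measure.pi_pi]
    refine Finset.prod_congr rfl fun i _ => ?_
    rw [← hm1, Measure.map_apply measurable_fst (hs i)]
  · -- second marginal
    have hF : Measurable fun g : Fin T → V × V => fun i => (g i).2 :=
      measurable_pi_lambda _ fun i => measurable_snd.comp (measurable_pi_apply i)
    rw [Measure.map_map measurable_snd e.measurable]
    have hcomp : (Prod.snd ∘ e : (Fin T → V × V) → (Fin T → V))
        = fun g i => (g i).2 := rfl
    rw [hcomp]
    refine (Measure.pi_eq fun s hs => ?_).symm
    rw [Measure.map_apply hF (MeasurableSet.univ_pi hs)]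
    have hpre : (fun (g : Fin T → V × V) i => (g i).2) ⁻¹' Set.pi Set.univ s
        = Set.pi Set.univ fun i => Prod.snd ⁻¹' s i := by
      ext g; simp [Set.mem_pi]
    rw [hpre, hπ, Measure.pi_pi]
    refine Finset.prod_congr rfl fun i _ => ?_
    rw [← hm2, Measure.map_apply measurable_snd (hs i)]
  · -- the almost-sure event
    set A : Set ((Fin T → V) × (Fin T → V)) :=
      {ωp : (Fin T → V) × (Fin T → V) |
          (∀ v ∈ H, (Finset.univ.filter fun i => ωp.1 i = v).card =
                    (Finset.univ.filter fun i => ωp.2 i = v).card) ∧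
          (Finset.univ.filter fun i => ωp.1 i = w).card ≤
            (Finset.univ.filter fun i => ωp.2 i = w).card ∧
          (∀ v ∉ insert w H, (Finset.univ.filter fun i => ωp.2 i = v).card ≤
            (Finset.univ.filter fun i => ωp.1 i = v).card)} with hA
    have hGmeas : MeasurableSet G := (Set.to_countable G).measurableSet
    have hPG : π (Set.pi Set.univ fun _ : Fin T => G) = 1 := by
      rw [hπ, Measure.pi_pi]
      have : μc.toMeasure G = 1 := (μc.toMeasure_apply_eq_one_iff hGmeas).mpr hsupp
      simp [this]
    have hsub : (Set.pi Set.univ fun _ : Fin T => G) ⊆ e ⁻¹' A := by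
      intro g hg
      have hxy : ∀ i, (g i).1 = (g i).2 ∨ ((g i).2 = w ∧ (g i).1 ∉ K) :=
        fun i => hg i (Set.mem_univ i)
      rw [Set.mem_preimage, hecoe, hA]
      refine ⟨?_, ?_, ?_⟩
      · intro v hv
        congr 1
        ext i
        simp only [Finset.mem_filter, Finset.mem_univ, true_and]
        rcases hxy i with h | ⟨hw2, hnot⟩
        · rw [h]
        · constructor
          · intro h1
            exact absurd (by rw [h1]; exact Finset.mem_insert_of_mem hv) hnot
          · intro h2
            have : w = v := hw2.symm.trans h2
            exact absurd (this ▸ hv) hw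
      · apply Finset.card_le_card
        intro i hi
        simp only [Finset.mem_filter, Finset.mem_univ, true_and] at hi ⊢
        rcases hxy i with h | ⟨hw2, hnot⟩
        · rw [← h]; exact hi
        · exact hw2
      · intro v hv
        apply Finset.card_le_card
        intro i hi
        simp only [Finset.mem_filter, Finset.mem_univ, true_and] at hi ⊢
        rcases hxy i with h | ⟨hw2, hnot⟩
        · rw [h]; exact hi
        · exact absurd (hw2.symm.trans hi ▸ hwK) (by rw [hK]; exact hv)
    have hν : IsProbabilityMeasure (π.map e) :=
      Measure.isProbabilityMeasure_map e.measurable.aemeasurable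
    rw [MeasurableEquiv.map_apply]
    refine le_antisymm prob_le_one ?_
    calc (1 : ENNReal) = π (Set.pi Set.univ fun _ : Fin T => G) := hPG.symm
      _ ≤ π (e ⁻¹' A) := measure_mono hsub
end

section
/- Let V be a finite type, and consider two probability mass functions q, q' on V such that q'(v) ≥ q(v) for all v in a set S and q'(v) ≤ q(v) for all v ∉ S. Partition [0,1) into intervals assigned to tokens so that interval lengths equal the probabilities, with the intervals for S placed first in both layouts and nested appropriately. Then for U uniform on [0,1), the induced tokens Y = f_q(U) and Y' = f_{q'}(U) satisfy: Y ∈ S implies Y' = Y. -/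
open MeasureTheory

namespace InvCDFAux

variable {V : Type*}

/-- Pick the token whose interval (in the contiguous layout given by the list of
(token, length) pairs) contains `u`. -/
noncomputable def pick : List (V × ℝ) → ℝ → V → V
  | [], _, d => d
  | p :: t, u, d => if u < p.2 then p.1 else pick t (u - p.2) d

/-- Total length of a layout list. -/
def total (l : List (V × ℝ)) : ℝ := (l.map Prod.snd).sum

/-- Total length assigned to token `v`. -/
def wsum [DecidableEq V] (v : V) (l : List (V × ℝ)) : ℝ :=
  (l.map (fun p => if p.1 = v then p.2 else 0)).sum

@[simp] lemma total_nil : total ([] : List (V × ℝ)) = 0 := rfl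

@[simp] lemma total_cons (p : V × ℝ) (t : List (V × ℝ)) :
    total (p :: t) = p.2 + total t := by simp [total]

@[simp] lemma total_append (l₁ l₂ : List (V × ℝ)) :
    total (l₁ ++ l₂) = total l₁ + total l₂ := by simp [total]

@[simp] lemma wsum_nil [DecidableEq V] (v : V) : wsum v ([] : List (V × ℝ)) = 0 := rfl

@[simp] lemma wsum_cons [DecidableEq V] (v : V) (p : V × ℝ) (t : List (V × ℝ)) :
    wsum v (p :: t) = (if p.1 = v then p.2 else 0) + wsum v t := by simp [wsum]

@[simp] lemma wsum_append [DecidableEq V] (v : V) (l₁ l₂ : List (V × ℝ)) :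
    wsum v (l₁ ++ l₂) = wsum v l₁ + wsum v l₂ := by simp [wsum]

lemma total_nonneg {l : List (V × ℝ)} (hl : ∀ p ∈ l, 0 ≤ p.2) : 0 ≤ total l := by
  apply List.sum_nonneg
  intro x hx
  obtain ⟨p, hp, rfl⟩ := List.mem_map.1 hx
  exact hl p hp

lemma wsum_nonneg [DecidableEq V] {l : List (V × ℝ)} (hl : ∀ p ∈ l, 0 ≤ p.2) (v : V) :
    0 ≤ wsum v l := by
  apply List.sum_nonneg
  intro x hx
  obtain ⟨p, hp, rfl⟩ := List.mem_map.1 hx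
  split
  · exact hl p hp
  · exact le_rfl

lemma pick_append_left {l₁ l₂ : List (V × ℝ)} {u : ℝ} (d : V)
    (h0 : 0 ≤ u) (h1 : u < total l₁) :
    pick (l₁ ++ l₂) u d = pick l₁ u d := by
  induction l₁ generalizing u with
  | nil => simp at h1; linarith
  | cons p t ih =>
    by_cases h : u < p.2
    · simp [pick, h]
    · have h0' : 0 ≤ u - p.2 := by linarith [not_lt.1 h]
      have h1' : u - p.2 < total t := by simp [total_cons] at h1; linarith
      simp [pick, h, ih h0' h1']

lemma pick_append_right {l₁ l₂ : List (V × ℝ)} {u : ℝ} (d : V)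
    (hl : ∀ p ∈ l₁, 0 ≤ p.2) (h : total l₁ ≤ u) :
    pick (l₁ ++ l₂) u d = pick l₂ (u - total l₁) d := by
  induction l₁ generalizing u with
  | nil => simp
  | cons p t ih =>
    have hp : 0 ≤ p.2 := hl p List.mem_cons_self
    have hT : 0 ≤ total t := total_nonneg fun x hx => hl x (List.mem_cons_of_mem p hx)
    have h' : total t ≤ u - p.2 := by simp only [total_cons] at h; linarith
    have hnot : ¬ u < p.2 := by push_neg; linarith
    have := ih (fun x hx => hl x (List.mem_cons_of_mem p hx)) h'
    rw [List.cons_append, pick, if_neg hnot, this, total_cons]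
    congr 1
    ring

lemma pick_mem {l : List (V × ℝ)} {u : ℝ} (d : V)
    (hl : ∀ p ∈ l, 0 ≤ p.2) (h0 : 0 ≤ u) (h1 : u < total l) :
    pick l u d ∈ l.map Prod.fst := by
  induction l generalizing u with
  | nil => simp [total] at h1; linarith
  | cons p t ih =>
    by_cases h : u < p.2
    · simp [pick, h]
    · have h0' : 0 ≤ u - p.2 := by linarith [not_lt.1 h]
      have h1' : u - p.2 < total t := by simp [total_cons] at h1; linarith
      have := ih (fun x hx => hl x (List.mem_cons_of_mem p hx)) h0' h1'
      simp only [pick, h, if_false, List.map_cons, List.mem_cons]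
      right
      simpa using this

lemma measurableSet_pick [DecidableEq V] (l : List (V × ℝ)) (d v : V) :
    MeasurableSet {u : ℝ | pick l u d = v} := by
  induction l with
  | nil =>
    by_cases h : d = v <;> simp [pick, h]
  | cons p t ih =>
    have hset : {u : ℝ | pick (p :: t) u d = v}
        = ({u : ℝ | u < p.2} ∩ {u : ℝ | p.1 = v})
          ∪ ({u : ℝ | u < p.2}ᶜ ∩ (fun u : ℝ => u - p.2) ⁻¹' {x : ℝ | pick t x d = v}) := by
      ext u
      by_cases h : u < p.2 <;> simp [pick, h]
    rw [hset]
    apply MeasurableSet.union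
    · apply (measurableSet_Iio (a := p.2)).inter
      by_cases h : p.1 = v <;> simp [h]
    · exact (measurableSet_Iio (a := p.2)).compl.inter
        (ih.preimage (measurable_id.sub_const p.2))

lemma volume_pick [DecidableEq V] {l : List (V × ℝ)} (d v : V)
    (hl : ∀ p ∈ l, 0 ≤ p.2) :
    volume (Set.Ico (0:ℝ) (total l) ∩ {u : ℝ | pick l u d = v})
      = ENNReal.ofReal (wsum v l) := by
  induction l with
  | nil => simp
  | cons p t ih =>
    have hp : 0 ≤ p.2 := hl p List.mem_cons_self
    have hlt : ∀ x ∈ t, 0 ≤ x.2 := fun x hx => hl x (List.mem_cons_of_mem p hx)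
    have hT : 0 ≤ total t := total_nonneg hlt
    have hsplit : Set.Ico (0:ℝ) (total (p :: t))
        = Set.Ico 0 p.2 ∪ Set.Ico p.2 (p.2 + total t) := by
      rw [total_cons, Set.Ico_union_Ico_eq_Ico hp (by linarith)]
    have h1 : Set.Ico (0:ℝ) p.2 ∩ {u : ℝ | pick (p :: t) u d = v}
        = if p.1 = v then Set.Ico (0:ℝ) p.2 else ∅ := by
      ext u
      by_cases hpv : p.1 = v
      · simp only [hpv, if_true, Set.mem_inter_iff, Set.mem_Ico, Set.mem_setOf_eq,
          and_iff_left_iff_imp]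
        rintro ⟨h0u, h1u⟩
        rw [pick, if_pos h1u, hpv]
      · simp only [hpv, if_false, Set.mem_empty_iff_false, iff_false, Set.mem_inter_iff,
          Set.mem_Ico, Set.mem_setOf_eq, not_and]
        rintro ⟨h0u, h1u⟩ hpick
        rw [pick, if_pos h1u] at hpick
        exact hpv hpick
    have h2 : Set.Ico p.2 (p.2 + total t) ∩ {u : ℝ | pick (p :: t) u d = v}
        = (fun u : ℝ => u - p.2) ⁻¹' (Set.Ico (0:ℝ) (total t) ∩ {x : ℝ | pick t x d = v}) := by
      ext u
      simp only [Set.mem_inter_iff, Set.mem_Ico, Set.mem_setOf_eq, Set.mem_preimage]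
      constructor
      · rintro ⟨⟨ha, hb⟩, hpick⟩
        rw [pick, if_neg (not_lt.2 ha)] at hpick
        exact ⟨⟨by linarith, by linarith⟩, hpick⟩
      · rintro ⟨⟨ha, hb⟩, hpick⟩
        have hge : p.2 ≤ u := by linarith
        refine ⟨⟨hge, by linarith⟩, ?_⟩
        rw [pick, if_neg (not_lt.2 hge)]
        exact hpick
    have hdisj : Disjoint (Set.Ico (0:ℝ) p.2 ∩ {u : ℝ | pick (p :: t) u d = v})
        (Set.Ico p.2 (p.2 + total t) ∩ {u : ℝ | pick (p :: t) u d = v}) :=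
      Set.disjoint_of_subset Set.inter_subset_left Set.inter_subset_left
        (Set.Ico_disjoint_Ico_same)
    have hmeas2 : MeasurableSet (Set.Ico p.2 (p.2 + total t)
        ∩ {u : ℝ | pick (p :: t) u d = v}) :=
      measurableSet_Ico.inter (measurableSet_pick _ d v)
    have htrans : volume ((fun u : ℝ => u - p.2) ⁻¹'
        (Set.Ico (0:ℝ) (total t) ∩ {x : ℝ | pick t x d = v}))
        = volume (Set.Ico (0:ℝ) (total t) ∩ {x : ℝ | pick t x d = v}) := by
      have : (fun u : ℝ => u - p.2) = (fun u : ℝ => -p.2 + u) := by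
        funext u; ring
      rw [this]
      exact measure_preimage_add volume (-p.2) _
    rw [hsplit, Set.union_inter_distrib_right, measure_union hdisj hmeas2, h1, h2, htrans,
      ih hlt, wsum_cons]
    by_cases hpv : p.1 = v
    · simp [hpv, Real.volume_Ico, ENNReal.ofReal_add hp (wsum_nonneg hlt v)]
    · simp [hpv]

end InvCDFAux

open InvCDFAux

/-- Inverse-CDF coupling: if `q'` dominates `q` on `S` and is dominated by `q` off `S`,
there are layout maps `f, g : ℝ → V` assigning to each token a portion of `[0,1)` of
Lebesgue measure equal to its probability under `q` resp. `q'`, such that whenever the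
token drawn under `q` lies in `S`, the token drawn under `q'` agrees with it. -/
theorem inverse_cdf_coupling {V : Type*} [Fintype V] [DecidableEq V]
    (q q' : V → ℝ) (hq0 : ∀ v, 0 ≤ q v) (hq'0 : ∀ v, 0 ≤ q' v)
    (hqsum : ∑ v, q v = 1) (hq'sum : ∑ v, q' v = 1)
    (S : Finset V)
    (hS : ∀ v ∈ S, q v ≤ q' v) (hSc : ∀ v ∉ S, q' v ≤ q v) :
    ∃ f g : ℝ → V,
      (∀ v : V, volume (Set.Ico (0:ℝ) 1 ∩ f ⁻¹' {v}) = ENNReal.ofReal (q v)) ∧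
      (∀ v : V, volume (Set.Ico (0:ℝ) 1 ∩ g ⁻¹' {v}) = ENNReal.ofReal (q' v)) ∧
      (∀ u ∈ Set.Ico (0:ℝ) 1, f u ∈ S → g u = f u) := by
  have hne : Nonempty V := by
    by_contra h
    rw [not_nonempty_iff] at h
    simp at hqsum
  obtain ⟨d⟩ := hne
  set P : List (V × ℝ) := S.toList.map (fun w => (w, q w)) with hP
  set Q : List (V × ℝ) := Sᶜ.toList.map (fun w => (w, q w)) with hQ
  set R : List (V × ℝ) := S.toList.map (fun w => (w, q' w - q w))
      ++ Sᶜ.toList.map (fun w => (w, q' w)) with hR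
  have hPn : ∀ p ∈ P, 0 ≤ p.2 := by
    intro p hp
    obtain ⟨w, hw, rfl⟩ := List.mem_map.1 hp
    exact hq0 w
  have hQn : ∀ p ∈ Q, 0 ≤ p.2 := by
    intro p hp
    obtain ⟨w, hw, rfl⟩ := List.mem_map.1 hp
    exact hq0 w
  have hRn : ∀ p ∈ R, 0 ≤ p.2 := by
    intro p hp
    rcases List.mem_append.1 hp with hp | hp
    · obtain ⟨w, hw, rfl⟩ := List.mem_map.1 hp
      have := hS w (Finset.mem_toList.1 hw)
      simpa using sub_nonneg.2 this
    · obtain ⟨w, hw, rfl⟩ := List.mem_map.1 hp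
      exact hq'0 w
  have htotal_map : ∀ (s : Finset V) (h : V → ℝ),
      total (s.toList.map (fun w => (w, h w))) = ∑ w ∈ s, h w := by
    intro s h
    rw [total, List.map_map]
    exact Finset.sum_map_toList s h
  have hwsum_map : ∀ (s : Finset V) (h : V → ℝ) (v : V),
      wsum v (s.toList.map (fun w => (w, h w))) = if v ∈ s then h v else 0 := by
    intro s h v
    rw [wsum, List.map_map]
    rw [show ((fun p : V × ℝ => if p.1 = v then p.2 else 0) ∘ fun w => (w, h w))
        = fun w => if w = v then h w else 0 from rfl, Finset.sum_map_toList,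
      Finset.sum_ite_eq' s v h]
  have hcompl : ∀ h : V → ℝ, (∑ w ∈ S, h w) + (∑ w ∈ Sᶜ, h w) = ∑ w, h w := by
    intro h
    exact Finset.sum_add_sum_compl S h
  have hTP : total P = ∑ w ∈ S, q w := htotal_map S q
  have hTPQ : total (P ++ Q) = 1 := by
    rw [total_append, hTP, htotal_map, hcompl, hqsum]
  have hTPR : total (P ++ R) = 1 := by
    rw [total_append, hTP, hR, total_append, htotal_map, htotal_map]
    have : (∑ w ∈ S, q w) + ((∑ w ∈ S, (q' w - q w)) + ∑ w ∈ Sᶜ, q' w)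
        = (∑ w ∈ S, q' w) + ∑ w ∈ Sᶜ, q' w := by
      rw [Finset.sum_sub_distrib]; ring
    rw [this, hcompl, hq'sum]
  refine ⟨fun u => pick (P ++ Q) u d, fun u => pick (P ++ R) u d, ?_, ?_, ?_⟩
  · intro v
    have := volume_pick (l := P ++ Q) d v (by
      intro p hp
      rcases List.mem_append.1 hp with hp | hp
      exacts [hPn p hp, hQn p hp])
    rw [hTPQ] at this
    have hw : wsum v (P ++ Q) = q v := by
      rw [wsum_append, hP, hQ, hwsum_map, hwsum_map]
      by_cases hv : v ∈ S <;> simp [hv]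
    rw [hw] at this
    exact this
  · intro v
    have := volume_pick (l := P ++ R) d v (by
      intro p hp
      rcases List.mem_append.1 hp with hp | hp
      exacts [hPn p hp, hRn p hp])
    rw [hTPR] at this
    have hw : wsum v (P ++ R) = q' v := by
      rw [wsum_append, hP, hR, wsum_append, hwsum_map, hwsum_map, hwsum_map]
      by_cases hv : v ∈ S <;> simp [hv]
    rw [hw] at this
    exact this
  · rintro u ⟨h0, h1⟩ hfS
    have hfS' : pick (P ++ Q) u d ∈ S := hfS
    show pick (P ++ R) u d = pick (P ++ Q) u d
    by_cases hu : u < total P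
    · rw [pick_append_left d h0 hu, pick_append_left d h0 hu]
    · exfalso
      push_neg at hu
      have h1' : u - total P < total Q := by
        have := hTPQ
        rw [total_append] at this
        linarith
      have hmem := pick_mem d hQn (by linarith) h1'
      rw [pick_append_right d hPn hu] at hfS'
      obtain ⟨x, hx, hfst⟩ := List.mem_map.1 hmem
      obtain ⟨w, hw, rfl⟩ := List.mem_map.1 hx
      rw [← hfst] at hfS'
      exact (Finset.mem_compl.1 (Finset.mem_toList.1 hw)) hfS'
end

section
/- Let (Ω, P) be a probability space and for each l ∈ ℕ let E_l be the event that in T i.i.d. draws from the distribution assigning probability p to each of tokens 1,…,l, probability q to token l+1, and arbitrary probabilities (each ≤ p, with q < p) to the remaining tokens of a set of size K, some token with index > l strictly outnumbers every token with index ≤ l. If l + 2 ≤ K and all the stated probability constraints hold for both parameters l and l+1 (with the distribution for l+1 obtained by raising token l+1's probability from q to p and reducing only probabilities of tokens with index ≥ l+2), then P(E_{l+1}) ≤ P(E_l). -/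
open MeasureTheory

/-- Monotonicity of the topic-change event probability in the size `l` of the
highest-priority class. The distribution `μ` gives probability `p` to each of the first
`l` tokens, `q < p` to token `l+1`, and at most `p` to every token; `μ'` is obtained by
raising token `l+1`'s probability to `p` and reducing only probabilities of tokens with
index ≥ `l+2`. Then the probability (under `T` i.i.d. draws) that some token outside the
first `l+1` strictly outnumbers each of the first `l+1` is at most the probability that
some token outside the first `l` strictly outnumbers each of the first `l`. -/
theorem event_prob_monotone (K : ℕ) (l : ℕ) (hl : l + 2 ≤ K)
    [MeasurableSpace (Fin K)] [MeasurableSingletonClass (Fin K)]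
    (p q : ENNReal) (hq : q < p) (hp1 : p < 1)
    (μ μ' : PMF (Fin K))
    (hμp : ∀ v : Fin K, v.val < l → μ v = p)
    (hμq : ∀ v : Fin K, v.val = l → μ v = q)
    (hμle : ∀ v : Fin K, μ v ≤ p)
    (hμ'p : ∀ v : Fin K, v.val < l + 1 → μ' v = p)
    (hμ'le : ∀ v : Fin K, l + 1 ≤ v.val → μ' v ≤ μ v)
    (T : ℕ) :
    (Measure.pi fun _ : Fin T => μ'.toMeasure)
        {ω : Fin T → Fin K | ∃ v : Fin K, l + 1 ≤ v.val ∧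
          ∀ u : Fin K, u.val < l + 1 →
            (Finset.univ.filter fun i => ω i = u).card <
            (Finset.univ.filter fun i => ω i = v).card} ≤
    (Measure.pi fun _ : Fin T => μ.toMeasure)
        {ω : Fin T → Fin K | ∃ v : Fin K, l ≤ v.val ∧
          ∀ u : Fin K, u.val < l →
            (Finset.univ.filter fun i => ω i = u).card <
            (Finset.univ.filter fun i => ω i = v).card} := by
  classical
  -- every subset of these countable spaces is measurable
  have measK : ∀ s : Set (Fin K), MeasurableSet s := fun s => s.to_countable.measurableSet
  have measKK : ∀ s : Set (Fin K × Fin K), MeasurableSet s :=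
    fun s => s.to_countable.measurableSet
  have measP : ∀ s : Set (Fin T → Fin K), MeasurableSet s :=
    fun s => s.to_countable.measurableSet
  have measPP : ∀ s : Set (Fin T → Fin K × Fin K), MeasurableSet s :=
    fun s => s.to_countable.measurableSet
  -- the special token with index l
  set tl : Fin K := ⟨l, by omega⟩ with htl
  have htlval : (tl : ℕ) = l := rfl
  have hμtl : μ tl = q := hμq tl rfl
  have hμ'tl : μ' tl = p := hμ'p tl (by omega)
  have hminf : ∀ x : Fin K, min (μ x) (μ' x) = if l + 1 ≤ x.val then μ' x else μ x := by
    intro x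
    by_cases hx : l + 1 ≤ x.val
    · rw [if_pos hx]; exact min_eq_right (hμ'le x hx)
    · rw [if_neg hx]
      rcases (by omega : x.val < l ∨ x.val = l) with h | h
      · rw [min_eq_left (le_of_eq ?_)]; rw [hμp x h, hμ'p x (by omega)]
      · have hxtl : x = tl := Fin.ext h
        rw [hxtl, hμtl, hμ'tl, min_eq_left hq.le]
  -- coupling weights
  set wd : Fin K × Fin K → ENNReal :=
    (fun a => if a.2 = a.1 then min (μ a.1) (μ' a.1) else 0) with hwd
  set wo : Fin K × Fin K → ENNReal :=
    (fun a => if a.2 = tl ∧ l + 1 ≤ a.1.val then μ a.1 - μ' a.1 else 0) with hwo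
  set w : Fin K × Fin K → ENNReal := (fun a => wd a + wo a) with hw
  set ν : Measure (Fin K × Fin K) := Measure.sum (fun a => w a • Measure.dirac a) with hνdef
  have hν : ∀ s : Set (Fin K × Fin K), ν s = ∑ a : Fin K × Fin K, s.indicator w a := by
    intro s
    rw [hνdef, Measure.sum_apply _ (measKK s), tsum_fintype]
    refine Finset.sum_congr rfl fun a _ => ?_
    rw [Measure.smul_apply, Measure.dirac_apply' _ (measKK s), smul_eq_mul]
    by_cases h : a ∈ s <;> simp [Set.indicator, h]
  -- row sums: first marginal is μ
  have hrow : ∀ x : Fin K, (∑ y : Fin K, w (x, y)) = μ x := by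
    intro x
    have h1 : (∑ y : Fin K, wd (x, y)) = min (μ x) (μ' x) := by
      rw [hwd]; simp
    have h2 : (∑ y : Fin K, wo (x, y)) = if l + 1 ≤ x.val then μ x - μ' x else 0 := by
      have he : ∀ y : Fin K, wo (x, y)
          = if y = tl then (if l + 1 ≤ x.val then μ x - μ' x else 0) else 0 := by
        intro y
        by_cases h : y = tl <;> by_cases h2 : l + 1 ≤ x.val <;> simp [hwo, h, h2] <;> intro h3 <;> omega
      rw [Finset.sum_congr rfl fun y _ => he y]
      simp
    rw [hw]
    simp only []
    rw [Finset.sum_add_distrib, h1, h2, hminf x]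
    by_cases hx : l + 1 ≤ x.val
    · rw [if_pos hx, if_pos hx, add_comm, tsub_add_cancel_of_le (hμ'le x hx)]
    · rw [if_neg hx, if_neg hx, add_zero]
  -- total mass computations
  set S : Finset (Fin K) := Finset.univ.filter (fun x => l + 1 ≤ x.val) with hS
  set U : Finset (Fin K) := Finset.univ.filter (fun x => x.val < l + 1) with hU
  have htlU : tl ∈ U := by
    rw [hU]; simp only [Finset.mem_filter, Finset.mem_univ, true_and]; omega
  have hsplit : ∀ f : Fin K → ENNReal,
      (∑ x : Fin K, f x) = (∑ x ∈ U, f x) + ∑ x ∈ S, f x := by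
    intro f
    rw [← Finset.sum_filter_add_sum_filter_not Finset.univ (fun x => x.val < l + 1) f]
    congr 1
    refine Finset.sum_congr (Finset.filter_congr fun x _ => ?_) fun _ _ => rfl
    simp [Nat.not_lt]
  set A : ENNReal := ∑ x ∈ U.erase tl, μ' x with hA
  have hUμ : (∑ x ∈ U, μ x) = A + q := by
    rw [← Finset.sum_erase_add U _ htlU, hμtl, hA]
    congr 1
    refine Finset.sum_congr rfl fun x hx => ?_
    have hx1 : x ≠ tl := (Finset.mem_erase.mp hx).1
    have hx2 : x.val < l + 1 := by
      have := (Finset.mem_erase.mp hx).2; rw [hU] at this; simpa using this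
    have hx3 : x.val < l := by
      rcases (by omega : x.val < l ∨ x.val = l) with h | h
      · exact h
      · exact absurd (Fin.ext h) hx1
    rw [hμp x hx3, hμ'p x (by omega)]
  have hUμ' : (∑ x ∈ U, μ' x) = A + p := by
    rw [← Finset.sum_erase_add U _ htlU, hμ'tl, hA]
  set B : ENNReal := ∑ x ∈ S, (μ x - μ' x) with hB
  set C : ENNReal := ∑ x ∈ S, μ' x with hC
  have hBC : B + C = ∑ x ∈ S, μ x := by
    rw [hB, hC, ← Finset.sum_add_distrib]
    refine Finset.sum_congr rfl fun x hx => ?_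
    have hx' : l + 1 ≤ x.val := by rw [hS] at hx; simpa using hx
    rw [tsub_add_cancel_of_le (hμ'le x hx')]
  have htotμ : (∑ x : Fin K, μ x) = 1 := by rw [← tsum_fintype (L := .unconditional _)]; exact μ.tsum_coe
  have htotμ' : (∑ x : Fin K, μ' x) = 1 := by rw [← tsum_fintype (L := .unconditional _)]; exact μ'.tsum_coe
  have heq1 : (A + q) + (B + C) = 1 := by rw [hBC, ← hUμ, ← hsplit, htotμ]
  have heq2 : (A + p) + C = 1 := by rw [← hUμ', hC, ← hsplit, htotμ']
  have hfin : A + C ≠ ⊤ := by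
    refine ne_top_of_le_ne_top ENNReal.one_ne_top ?_
    calc A + C ≤ (A + p) + C := by gcongr; exact le_self_add
    _ = 1 := heq2
  have harith : q + B = p := by
    have h3 : (A + C) + (q + B) = (A + C) + p := by
      calc (A + C) + (q + B) = (A + q) + (B + C) := by abel
      _ = (A + p) + C := by rw [heq1, heq2]
      _ = (A + C) + p := by abel
    exact (ENNReal.add_right_inj hfin).mp h3
  -- column sums: second marginal is μ'
  have hcol : ∀ y : Fin K, (∑ x : Fin K, w (x, y)) = μ' y := by
    intro y
    have h1 : (∑ x : Fin K, wd (x, y)) = min (μ y) (μ' y) := by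
      have he : ∀ x : Fin K, wd (x, y) = if x = y then min (μ y) (μ' y) else 0 := by
        intro x
        by_cases h : x = y
        · subst h; simp [hwd]
        · simp only [hwd]
          rw [if_neg (fun hyx => h hyx.symm), if_neg h]
      rw [Finset.sum_congr rfl fun x _ => he x]
      simp
    have h2 : (∑ x : Fin K, wo (x, y)) = if y = tl then B else 0 := by
      by_cases hy : y = tl
      · rw [if_pos hy, hB]
        rw [Finset.sum_filter]
        refine Finset.sum_congr rfl fun x _ => ?_
        simp [hwo, hy]
      · rw [if_neg hy]
        refine Finset.sum_eq_zero fun x _ => ?_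
        simp [hwo, hy]
    rw [hw]
    simp only []
    rw [Finset.sum_add_distrib, h1, h2, hminf y]
    by_cases hy : y = tl
    · subst hy
      rw [if_neg (by omega), if_pos rfl, hμtl, hμ'tl, harith]
    · by_cases hy2 : l + 1 ≤ y.val
      · rw [if_pos hy2, if_neg hy, add_zero]
      · have hy3 : y.val < l := by
          rcases (by omega : y.val < l ∨ y.val = l) with h | h
          · exact h
          · exact absurd (Fin.ext h) hy
        rw [if_neg hy2, if_neg hy, add_zero, hμp y hy3, hμ'p y (by omega)]
  -- marginals on singletons
  have hνfst : ∀ c : Fin K, ν (Prod.fst ⁻¹' {c}) = μ c := by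
    intro c
    rw [hν, Fintype.sum_prod_type]
    have he : ∀ x y : Fin K, (Prod.fst ⁻¹' {c} : Set (Fin K × Fin K)).indicator w (x, y)
        = if x = c then w (x, y) else 0 := by
      intro x y
      by_cases h : x = c <;> simp [Set.indicator, h]
    calc (∑ x : Fin K, ∑ y : Fin K,
          (Prod.fst ⁻¹' {c} : Set (Fin K × Fin K)).indicator w (x, y))
        = ∑ x : Fin K, (if x = c then (∑ y : Fin K, w (x, y)) else 0) := by
          refine Finset.sum_congr rfl fun x _ => ?_
          by_cases h : x = c <;> simp [he, h]
      _ = ∑ y : Fin K, w (c, y) := by simp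
      _ = μ c := hrow c
  have hνsnd : ∀ c : Fin K, ν (Prod.snd ⁻¹' {c}) = μ' c := by
    intro c
    rw [hν, Fintype.sum_prod_type_right]
    have he : ∀ x y : Fin K, (Prod.snd ⁻¹' {c} : Set (Fin K × Fin K)).indicator w (x, y)
        = if y = c then w (x, y) else 0 := by
      intro x y
      by_cases h : y = c <;> simp [Set.indicator, h]
    calc (∑ y : Fin K, ∑ x : Fin K,
          (Prod.snd ⁻¹' {c} : Set (Fin K × Fin K)).indicator w (x, y))
        = ∑ y : Fin K, (if y = c then (∑ x : Fin K, w (x, y)) else 0) := by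
          refine Finset.sum_congr rfl fun y _ => ?_
          by_cases h : y = c <;> simp [he, h]
      _ = ∑ x : Fin K, w (x, c) := by simp
      _ = μ' c := hcol c
  haveI : IsProbabilityMeasure ν := by
    constructor
    rw [hν]
    have : ∀ a : Fin K × Fin K, (Set.univ : Set (Fin K × Fin K)).indicator w a = w a := by
      intro a; simp
    rw [Finset.sum_congr rfl fun a _ => this a, Fintype.sum_prod_type]
    rw [Finset.sum_congr rfl fun x _ => hrow x, htotμ]
  -- the coupling's good set is almost sure
  set Good : Set (Fin K × Fin K) :=
    {a | a.2 = a.1 ∨ (a.2 = tl ∧ l + 1 ≤ a.1.val)} with hGood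
  have hGoodc : ν Goodᶜ = 0 := by
    rw [hν]
    refine Finset.sum_eq_zero fun a _ => ?_
    by_cases h : a ∈ Goodᶜ
    · rw [Set.indicator_of_mem h]
      rw [hGood] at h
      simp only [Set.mem_compl_iff, Set.mem_setOf_eq, not_or, not_and] at h
      have h1 : wd a = 0 := by simp [hwd, h.1]
      have h2 : wo a = 0 := by
        rw [hwo]
        simp only []
        rw [if_neg]
        rintro ⟨ha, hb⟩
        exact h.2 ha hb
      rw [hw]; simp [h1, h2]
    · exact Set.indicator_of_notMem h _
  -- projections and product coupling
  set F : (Fin T → Fin K × Fin K) → (Fin T → Fin K) := (fun σ i => (σ i).1) with hFdef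
  set G : (Fin T → Fin K × Fin K) → (Fin T → Fin K) := (fun σ i => (σ i).2) with hGdef
  have hF : Measurable F :=
    measurable_pi_lambda _ fun i => measurable_fst.comp (measurable_pi_apply i)
  have hG : Measurable G :=
    measurable_pi_lambda _ fun i => measurable_snd.comp (measurable_pi_apply i)
  set π : Measure (Fin T → Fin K × Fin K) := Measure.pi (fun _ => ν) with hπ
  have hmapF : π.map F = Measure.pi fun _ : Fin T => μ.toMeasure := by
    refine Measure.ext_of_singleton fun ω => ?_
    rw [Measure.map_apply hF (measP _)]
    have hpre : F ⁻¹' {ω} = Set.pi Set.univ fun i => (Prod.fst ⁻¹' {ω i}) := by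
      ext g; simp [hFdef, Set.mem_pi, funext_iff]
    have hsing : ({ω} : Set (Fin T → Fin K)) = Set.pi Set.univ fun i => {ω i} := by
      ext g; simp [Set.mem_pi, funext_iff]
    rw [hpre, hπ, Measure.pi_pi, hsing, Measure.pi_pi]
    refine Finset.prod_congr rfl fun i _ => ?_
    rw [hνfst (ω i), PMF.toMeasure_apply_singleton _ _ (measurableSet_singleton _)]
  have hmapG : π.map G = Measure.pi fun _ : Fin T => μ'.toMeasure := by
    refine Measure.ext_of_singleton fun ω => ?_
    rw [Measure.map_apply hG (measP _)]
    have hpre : G ⁻¹' {ω} = Set.pi Set.univ fun i => (Prod.snd ⁻¹' {ω i}) := by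
      ext g; simp [hGdef, Set.mem_pi, funext_iff]
    have hsing : ({ω} : Set (Fin T → Fin K)) = Set.pi Set.univ fun i => {ω i} := by
      ext g; simp [Set.mem_pi, funext_iff]
    rw [hpre, hπ, Measure.pi_pi, hsing, Measure.pi_pi]
    refine Finset.prod_congr rfl fun i _ => ?_
    rw [hνsnd (ω i), PMF.toMeasure_apply_singleton _ _ (measurableSet_singleton _)]
  set E' : Set (Fin T → Fin K) := {ω : Fin T → Fin K | ∃ v : Fin K, l + 1 ≤ v.val ∧
          ∀ u : Fin K, u.val < l + 1 →
            (Finset.univ.filter fun i => ω i = u).card <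
            (Finset.univ.filter fun i => ω i = v).card} with hE'
  set E : Set (Fin T → Fin K) := {ω : Fin T → Fin K | ∃ v : Fin K, l ≤ v.val ∧
          ∀ u : Fin K, u.val < l →
            (Finset.univ.filter fun i => ω i = u).card <
            (Finset.univ.filter fun i => ω i = v).card} with hE
  -- the pointwise coupling argument
  have hsub : G ⁻¹' E' ⊆ (F ⁻¹' E) ∪ ⋃ i : Fin T, (fun σ => σ i) ⁻¹' Goodᶜ := by
    intro σ hσ
    by_cases hg : ∀ i : Fin T, σ i ∈ Good
    · left
      rw [Set.mem_preimage, hE'] at hσ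
      obtain ⟨v, hv, hcmp⟩ := hσ
      rw [Set.mem_preimage, hE]
      refine ⟨v, by omega, fun u hu => ?_⟩
      have key1 : (Finset.univ.filter fun i => F σ i = u)
          = (Finset.univ.filter fun i => G σ i = u) := by
        refine Finset.filter_congr fun i _ => ?_
        rw [hFdef, hGdef]
        simp only []
        constructor
        · intro h1
          rcases hg i with h | ⟨h2, h3⟩
          · rw [h, h1]
          · exfalso; rw [h1] at h3; omega
        · intro h2
          rcases hg i with h | ⟨h3, _⟩
          · rw [← h, h2]
          · exfalso
            have hutl : u = tl := by rw [← h2, h3]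
            rw [hutl] at hu; omega
      have key2 : (Finset.univ.filter fun i => G σ i = v)
          ⊆ (Finset.univ.filter fun i => F σ i = v) := by
        intro i hi
        simp only [Finset.mem_filter, Finset.mem_univ, true_and] at hi ⊢
        rcases hg i with h | ⟨h2, _⟩
        · rw [hFdef]; simp only []; rw [← h]; exact hi
        · exfalso
          rw [hGdef] at hi; simp only [] at hi
          rw [hi] at h2
          rw [h2] at hv; omega
      calc (Finset.univ.filter fun i => F σ i = u).card
          = (Finset.univ.filter fun i => G σ i = u).card := by rw [key1]
        _ < (Finset.univ.filter fun i => G σ i = v).card := hcmp u (by omega)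
        _ ≤ (Finset.univ.filter fun i => F σ i = v).card := Finset.card_le_card key2
    · right
      push_neg at hg
      obtain ⟨i, hi⟩ := hg
      exact Set.mem_iUnion.mpr ⟨i, hi⟩
  -- assemble
  have hbadnull : π (⋃ i : Fin T, (fun σ => σ i) ⁻¹' Goodᶜ) = 0 :=
    measure_iUnion_null fun i => Measure.pi_eval_preimage_null _ hGoodc
  calc (Measure.pi fun _ : Fin T => μ'.toMeasure) E'
      = π (G ⁻¹' E') := by rw [← hmapG, Measure.map_apply hG (measP _)]
    _ ≤ π ((F ⁻¹' E) ∪ ⋃ i : Fin T, (fun σ => σ i) ⁻¹' Goodᶜ) := measure_mono hsub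
    _ ≤ π (F ⁻¹' E) + π (⋃ i : Fin T, (fun σ => σ i) ⁻¹' Goodᶜ) := measure_union_le _ _
    _ = π (F ⁻¹' E) := by rw [hbadnull, add_zero]
    _ = (Measure.pi fun _ : Fin T => μ.toMeasure) E := by
        rw [← hmapF, Measure.map_apply hF (measP _)]
end
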